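/- arXiv:2001.00831 — 2 statements merged into one kernel-verified Lean document; each statement's English description precedes it below -/
import Mathlib

section
/- If F : ℝ^d → ℝ is Lipschitz continuous with constant L₀ and η > 0, then for every θ ∈ ℝ^d, E_v[ ‖(F(θ + η v) - F(θ)) · v‖² ] ≤ η² L₀² (d + 4)², where v is a standard Gaussian vector in ℝ^d. -/
open MeasureTheory ProbabilityTheory

namespace SecondMomentAux

open Real Set

local notation "γ" => gaussianReal 0 1

lemma pdf_nnreal : gaussianPDF 0 1 = fun x => ((gaussianPDFReal 0 1 x).toNNReal : ENNReal) := by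
  funext x
  rw [gaussianPDF_def]
  rfl

lemma integral_gauss (g : ℝ → ℝ) :
    ∫ x, g x ∂γ = ∫ x, gaussianPDFReal 0 1 x * g x := by
  rw [gaussianReal_of_var_ne_zero _ one_ne_zero, pdf_nnreal,
    integral_withDensity_eq_integral_smul (measurable_gaussianPDFReal 0 1).real_toNNReal g]
  refine integral_congr_ae (Filter.Eventually.of_forall fun x => ?_)
  simp only [NNReal.smul_def, smul_eq_mul,
    Real.coe_toNNReal _ (gaussianPDFReal_nonneg 0 1 x)]

lemma pdf_eq (x : ℝ) :
    gaussianPDFReal 0 1 x = (√(2 * π))⁻¹ * rexp (-(1/2) * x ^ 2) := by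
  simp only [gaussianPDFReal, NNReal.coe_one, mul_one, sub_zero]
  ring_nf

lemma integrable_aux (n : ℕ) :
    Integrable (fun x : ℝ => x ^ n * rexp (-(1/2) * x ^ 2)) := by
  have h := integrable_rpow_mul_exp_neg_mul_sq (b := 1/2) (by norm_num) (s := (n : ℝ))
    (lt_of_lt_of_le neg_one_lt_zero (Nat.cast_nonneg n))
  refine h.congr (Filter.Eventually.of_forall fun x => ?_)
  simp [Real.rpow_natCast]

lemma integrable_pow_gauss (n : ℕ) : Integrable (fun x : ℝ => x ^ n) γ := by
  rw [gaussianReal_of_var_ne_zero _ one_ne_zero, pdf_nnreal,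
    integrable_withDensity_iff_integrable_smul (measurable_gaussianPDFReal 0 1).real_toNNReal]
  refine (((integrable_aux n).const_mul ((√(2 * π))⁻¹)).congr
    (Filter.Eventually.of_forall fun x => ?_))
  show (√(2 * π))⁻¹ * (x ^ n * rexp (-(1/2) * x ^ 2))
      = (gaussianPDFReal 0 1 x).toNNReal • x ^ n
  rw [NNReal.smul_def, smul_eq_mul, Real.coe_toNNReal _ (gaussianPDFReal_nonneg 0 1 x), pdf_eq]
  ring

lemma ioi_moment (q : ℝ) (hq : -1 < q) :
    ∫ x in Ioi (0:ℝ), x ^ q * rexp (-(1/2) * x ^ (2:ℝ)) =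
      (1/2 : ℝ) ^ (-(q+1)/2) * (1/2) * Real.Gamma ((q+1)/2) :=
  integral_rpow_mul_exp_neg_mul_rpow two_pos hq (by norm_num)

lemma half_rpow (r : ℝ) : (1/2 : ℝ) ^ (-r) = (2:ℝ) ^ r := by
  rw [one_div, Real.inv_rpow (by norm_num : (0:ℝ) ≤ 2), ← Real.rpow_neg (by norm_num), neg_neg]

lemma gamma_3half : Real.Gamma (3/2) = (1/2) * √π := by
  rw [show (3/2 : ℝ) = 1/2 + 1 by norm_num, Real.Gamma_add_one (by norm_num),
    Real.Gamma_one_half_eq]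

lemma gamma_5half : Real.Gamma (5/2) = (3/4) * √π := by
  rw [show (5/2 : ℝ) = 3/2 + 1 by norm_num, Real.Gamma_add_one (by norm_num), gamma_3half]
  ring

lemma int_moment2 : ∫ x : ℝ, x ^ 2 * rexp (-(1/2) * x ^ 2) = √(2*π) := by
  have habs := integral_comp_abs (f := fun x : ℝ => x ^ 2 * rexp (-(1/2) * x ^ 2))
  have h1 : ∫ x : ℝ, x ^ 2 * rexp (-(1/2) * x ^ 2)
      = 2 * ∫ x in Ioi (0:ℝ), x ^ 2 * rexp (-(1/2) * x ^ 2) := by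
    rw [← habs]
    refine integral_congr_ae (Filter.Eventually.of_forall fun x => ?_)
    show x ^ 2 * rexp (-(1/2) * x ^ 2) = |x| ^ 2 * rexp (-(1/2) * |x| ^ 2)
    rw [sq_abs]
  have h2 : ∫ x in Ioi (0:ℝ), x ^ (2:ℝ) * rexp (-(1/2) * x ^ (2:ℝ))
      = (1/2 : ℝ) ^ (-(3:ℝ)/2) * (1/2) * Real.Gamma (3/2) := by
    rw [ioi_moment 2 (by norm_num)]
    norm_num
  have h3 : ∫ x in Ioi (0:ℝ), x ^ 2 * rexp (-(1/2) * x ^ 2)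
      = (1/2 : ℝ) ^ (-(3:ℝ)/2) * (1/2) * Real.Gamma (3/2) := by
    rw [← h2]
    refine setIntegral_congr_fun measurableSet_Ioi fun x _ => ?_
    norm_num [Real.rpow_natCast]
  rw [h1, h3, gamma_3half, show -(3:ℝ)/2 = -((3:ℝ)/2) by ring, half_rpow,
    show (3:ℝ)/2 = 1 + 1/2 by norm_num, Real.rpow_add (by norm_num), Real.rpow_one,
    ← Real.sqrt_eq_rpow, Real.sqrt_mul (by norm_num : (0:ℝ) ≤ 2)]
  ring

lemma int_moment4 : ∫ x : ℝ, x ^ 4 * rexp (-(1/2) * x ^ 2) = 3 * √(2*π) := by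
  have habs := integral_comp_abs (f := fun x : ℝ => x ^ 4 * rexp (-(1/2) * x ^ 2))
  have h1 : ∫ x : ℝ, x ^ 4 * rexp (-(1/2) * x ^ 2)
      = 2 * ∫ x in Ioi (0:ℝ), x ^ 4 * rexp (-(1/2) * x ^ 2) := by
    rw [← habs]
    refine integral_congr_ae (Filter.Eventually.of_forall fun x => ?_)
    show x ^ 4 * rexp (-(1/2) * x ^ 2) = |x| ^ 4 * rexp (-(1/2) * |x| ^ 2)
    rw [sq_abs, show |x| ^ 4 = (|x| ^ 2) ^ 2 by ring, sq_abs]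
    ring
  have h2 : ∫ x in Ioi (0:ℝ), x ^ (4:ℝ) * rexp (-(1/2) * x ^ (2:ℝ))
      = (1/2 : ℝ) ^ (-(5:ℝ)/2) * (1/2) * Real.Gamma (5/2) := by
    rw [ioi_moment 4 (by norm_num)]
    norm_num
  have h3 : ∫ x in Ioi (0:ℝ), x ^ 4 * rexp (-(1/2) * x ^ 2)
      = (1/2 : ℝ) ^ (-(5:ℝ)/2) * (1/2) * Real.Gamma (5/2) := by
    rw [← h2]
    refine setIntegral_congr_fun measurableSet_Ioi fun x _ => ?_
    rw [show x ^ (4:ℝ) = x ^ (4:ℕ) by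
      rw [show ((4:ℝ)) = ((4:ℕ):ℝ) by norm_num, Real.rpow_natCast]]
    norm_num [Real.rpow_natCast]
  rw [h1, h3, gamma_5half, show -(5:ℝ)/2 = -((5:ℝ)/2) by ring, half_rpow,
    show (5:ℝ)/2 = 1 + (1 + 1/2) by norm_num, Real.rpow_add (by norm_num),
    Real.rpow_add (by norm_num), Real.rpow_one,
    ← Real.sqrt_eq_rpow, Real.sqrt_mul (by norm_num : (0:ℝ) ≤ 2)]
  ring

lemma sqrt_two_pi_pos : (0:ℝ) < √(2*π) := Real.sqrt_pos.mpr (by positivity)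

lemma moment2 : ∫ x : ℝ, x ^ 2 ∂γ = 1 := by
  rw [integral_gauss]
  have h : ∀ x : ℝ, gaussianPDFReal 0 1 x * x ^ 2
      = (√(2*π))⁻¹ * (x ^ 2 * rexp (-(1/2) * x ^ 2)) := by
    intro x; rw [pdf_eq]; ring
  simp_rw [h]
  rw [integral_const_mul, int_moment2, inv_mul_cancel₀ sqrt_two_pi_pos.ne']

lemma moment4 : ∫ x : ℝ, x ^ 4 ∂γ = 3 := by
  rw [integral_gauss]
  have h : ∀ x : ℝ, gaussianPDFReal 0 1 x * x ^ 4
      = (√(2*π))⁻¹ * (x ^ 4 * rexp (-(1/2) * x ^ 2)) := by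
    intro x; rw [pdf_eq]; ring
  simp_rw [h]
  rw [integral_const_mul, int_moment4, ← mul_assoc, mul_comm _ (3:ℝ), mul_assoc,
    inv_mul_cancel₀ sqrt_two_pi_pos.ne', mul_one]

end SecondMomentAux

open SecondMomentAux

/-- Standard Gaussian measure `N(0, I_d)` on `ℝ^d`. -/
noncomputable def stdGaussian (d : ℕ) : Measure (EuclideanSpace ℝ (Fin d)) :=
  (Measure.pi fun _ : Fin d => gaussianReal 0 1).map
    (EuclideanSpace.equiv (Fin d) ℝ).symm

namespace SecondMomentAux

variable {d : ℕ}

local notation "μd" => Measure.pi (fun _ : Fin d => gaussianReal 0 1)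

local notation "γ" => gaussianReal 0 1

/-- Local measure space structure on `ℝ` given by the standard Gaussian. -/
@[reducible] noncomputable def gms : MeasureSpace ℝ := ⟨gaussianReal 0 1⟩

lemma gms_sf : SigmaFinite (gms.volume) :=
  inferInstanceAs (SigmaFinite (gaussianReal 0 1))

lemma integrable_pi_prod (f : Fin d → ℝ → ℝ) (hf : ∀ i, Integrable (f i) γ) :
    Integrable (fun x : Fin d → ℝ => ∏ i, f i (x i)) μd :=
  Integrable.fintype_prod (μ := fun _ => γ) hf

lemma integral_pi_prod (f : Fin d → ℝ → ℝ) :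
    ∫ x : Fin d → ℝ, ∏ i, f i (x i) ∂μd = ∏ i, ∫ x, f i x ∂γ :=
  MeasureTheory.integral_fintype_prod_eq_prod f (μ := fun _ => γ)

/-- Factor functions: `g i j k t` is `t^2` at coordinates `i` and `j`. -/
def g (i j k : Fin d) : ℝ → ℝ :=
  fun t => (if k = i then t ^ 2 else 1) * (if k = j then t ^ 2 else 1)

lemma g_prod (i j : Fin d) (x : Fin d → ℝ) :
    (∏ k, g i j k (x k)) = x i ^ 2 * x j ^ 2 := by
  unfold g
  rw [Finset.prod_mul_distrib]
  congr 1 <;> simp [Finset.prod_ite_eq']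

lemma g_eq (i j k : Fin d) :
    g i j k = fun t => t ^ ((if k = i then 2 else 0) + (if k = j then 2 else 0)) := by
  funext t; unfold g; rw [pow_add]; congr 1 <;> split <;> simp

lemma g_integrable (i j k : Fin d) : Integrable (g i j k) γ := by
  rw [g_eq]; exact integrable_pow_gauss _

lemma g_integral (i j k : Fin d) :
    ∫ t, g i j k t ∂γ = (if k = i then (if k = j then (3:ℝ) else 1) else 1) := by
  rw [g_eq]
  by_cases hi : k = i
  · by_cases hj : k = j
    · simp only [if_pos hi, if_pos hj]; exact moment4
    · simp only [if_pos hi, if_neg hj]; exact moment2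
  · by_cases hj : k = j
    · simp only [if_neg hi, if_pos hj]; exact moment2
    · simp only [if_neg hi, if_neg hj]; simp

lemma sq_term_integrable (i j : Fin d) :
    Integrable (fun x : Fin d → ℝ => x i ^ 2 * x j ^ 2) μd :=
  (integrable_pi_prod (g i j) (g_integrable i j)).congr
    (Filter.Eventually.of_forall fun x => g_prod i j x)

lemma sq_term_integral (i j : Fin d) :
    ∫ x : Fin d → ℝ, x i ^ 2 * x j ^ 2 ∂μd = if i = j then 3 else 1 := by
  have h : ∫ x : Fin d → ℝ, x i ^ 2 * x j ^ 2 ∂μd = ∏ k, ∫ t, g i j k t ∂γ := by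
    rw [← integral_pi_prod]
    exact integral_congr_ae (Filter.Eventually.of_forall fun x => (g_prod i j x).symm)
  rw [h, Finset.prod_congr rfl (fun k _ => g_integral i j k)]
  by_cases hij : i = j
  · subst hij
    rw [if_pos rfl]
    have h2 : ∀ k : Fin d, (if k = i then (if k = i then (3:ℝ) else 1) else 1)
        = if k = i then (3:ℝ) else 1 := by
      intro k; by_cases hk : k = i <;> simp [hk]
    rw [Finset.prod_congr rfl (fun k _ => h2 k)]
    simp [Finset.prod_ite_eq']
  · rw [if_neg hij]
    refine Finset.prod_eq_one fun k _ => ?_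
    by_cases hk : k = i
    · subst hk
      rw [if_pos rfl, if_neg hij]
    · rw [if_neg hk]

lemma sum_ite_eq_card : ∑ i : Fin d, ∑ j : Fin d, (if i = j then (3:ℝ) else 1)
    = d * (d + 2) := by
  have h : ∀ i : Fin d, ∑ j : Fin d, (if i = j then (3:ℝ) else 1) = (d:ℝ) + 2 := by
    intro i
    have h2 : ∀ j : Fin d, (if i = j then (3:ℝ) else 1) = 1 + (if i = j then 2 else 0) := by
      intro j; split <;> norm_num
    rw [Finset.sum_congr rfl fun j _ => h2 j, Finset.sum_add_distrib, Finset.sum_const,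
      Finset.sum_ite_eq]
    simp [Finset.card_univ]
  rw [Finset.sum_congr rfl fun i _ => h i, Finset.sum_const]
  simp [Finset.card_univ]
  ring

lemma pi_integrable4 :
    Integrable (fun x : Fin d → ℝ => (∑ i, x i ^ 2) ^ 2) μd := by
  have h : ∀ x : Fin d → ℝ, (∑ i, x i ^ 2) ^ 2 = ∑ i, ∑ j, x i ^ 2 * x j ^ 2 := by
    intro x; rw [sq, Finset.sum_mul_sum]
  refine (integrable_finset_sum _ fun i _ => integrable_finset_sum _ fun j _ =>
    sq_term_integrable i j).congr (Filter.Eventually.of_forall fun x => (h x).symm)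

lemma pi_integral4 :
    ∫ x : Fin d → ℝ, (∑ i, x i ^ 2) ^ 2 ∂μd = d * (d + 2) := by
  have h : ∀ x : Fin d → ℝ, (∑ i, x i ^ 2) ^ 2 = ∑ i, ∑ j, x i ^ 2 * x j ^ 2 := by
    intro x; rw [sq, Finset.sum_mul_sum]
  rw [integral_congr_ae (Filter.Eventually.of_forall fun x => h x),
    integral_finset_sum _ (fun i _ => integrable_finset_sum _ fun j _ => sq_term_integrable i j)]
  rw [Finset.sum_congr rfl fun i _ =>
    integral_finset_sum _ (fun j _ => sq_term_integrable i j)]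
  rw [Finset.sum_congr rfl fun i _ => Finset.sum_congr rfl fun j _ => sq_term_integral i j]
  exact sum_ite_eq_card

lemma stdGaussian_eq :
    stdGaussian d = (Measure.pi fun _ : Fin d => gaussianReal 0 1).map
      (MeasurableEquiv.toLp 2 (Fin d → ℝ)) := rfl

lemma norm_symm_sq (x : Fin d → ℝ) :
    ‖(MeasurableEquiv.toLp 2 (Fin d → ℝ)) x‖ ^ 2 = ∑ i, x i ^ 2 := by
  rw [EuclideanSpace.norm_eq, Real.sq_sqrt (by positivity)]
  refine Finset.sum_congr rfl fun i _ => ?_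
  rw [Real.norm_eq_abs, sq_abs]
  rfl

lemma std_integrable4 : Integrable (fun v => ‖v‖ ^ 4) (stdGaussian d) := by
  rw [stdGaussian_eq, integrable_map_equiv]
  refine pi_integrable4.congr (Filter.Eventually.of_forall fun x => ?_)
  show (∑ i, x i ^ 2) ^ 2 = ‖(MeasurableEquiv.toLp 2 (Fin d → ℝ)) x‖ ^ 4
  rw [show (4:ℕ) = 2 * 2 from rfl, pow_mul, norm_symm_sq]

lemma std_integral4 : ∫ v, ‖v‖ ^ 4 ∂(stdGaussian d) = d * (d + 2) := by
  rw [stdGaussian_eq, integral_map_equiv, ← pi_integral4]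
  refine integral_congr_ae (Filter.Eventually.of_forall fun x => ?_)
  show ‖(MeasurableEquiv.toLp 2 (Fin d → ℝ)) x‖ ^ 4 = (∑ i, x i ^ 2) ^ 2
  rw [show (4:ℕ) = 2 * 2 from rfl, pow_mul, norm_symm_sq]

end SecondMomentAux

theorem second_moment_bound (d : ℕ) (F : EuclideanSpace ℝ (Fin d) → ℝ) (L₀ η : ℝ)
    (hL : ∀ x y, |F x - F y| ≤ L₀ * ‖x - y‖) (hη : 0 < η)
    (θ : EuclideanSpace ℝ (Fin d)) :
    (∫ v, ‖(F (θ + η • v) - F θ) • v‖ ^ 2 ∂(stdGaussian d))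
      ≤ η ^ 2 * L₀ ^ 2 * ((d : ℝ) + 4) ^ 2 := by
  have hpt : ∀ v : EuclideanSpace ℝ (Fin d),
      ‖(F (θ + η • v) - F θ) • v‖ ^ 2 ≤ (η ^ 2 * L₀ ^ 2) * ‖v‖ ^ 4 := by
    intro v
    have h1 : |F (θ + η • v) - F θ| ≤ L₀ * (|η| * ‖v‖) := by
      have h := hL (θ + η • v) θ
      rwa [add_sub_cancel_left, norm_smul, Real.norm_eq_abs] at h
    have h2 : |F (θ + η • v) - F θ| ^ 2 ≤ (L₀ * (|η| * ‖v‖)) ^ 2 :=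
      pow_le_pow_left₀ (abs_nonneg _) h1 2
    rw [norm_smul, mul_pow, Real.norm_eq_abs]
    calc |F (θ + η • v) - F θ| ^ 2 * ‖v‖ ^ 2
        ≤ (L₀ * (|η| * ‖v‖)) ^ 2 * ‖v‖ ^ 2 :=
          mul_le_mul_of_nonneg_right h2 (by positivity)
      _ = (η ^ 2 * L₀ ^ 2) * ‖v‖ ^ 4 := by rw [← sq_abs η]; ring
  have hInt : Integrable (fun v => (η ^ 2 * L₀ ^ 2) * ‖v‖ ^ 4) (stdGaussian d) :=
    std_integrable4.const_mul _
  have h1 : (∫ v, ‖(F (θ + η • v) - F θ) • v‖ ^ 2 ∂(stdGaussian d))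
      ≤ ∫ v, (η ^ 2 * L₀ ^ 2) * ‖v‖ ^ 4 ∂(stdGaussian d) :=
    integral_mono_of_nonneg (Filter.Eventually.of_forall fun v => by positivity) hInt
      (Filter.Eventually.of_forall hpt)
  have h2 : ∫ v, (η ^ 2 * L₀ ^ 2) * ‖v‖ ^ 4 ∂(stdGaussian d)
      = (η ^ 2 * L₀ ^ 2) * (d * (d + 2)) := by
    rw [integral_const_mul, std_integral4]
  refine h1.trans ?_
  rw [h2]
  have hd : (0:ℝ) ≤ d := Nat.cast_nonneg d
  have : (d : ℝ) * (d + 2) ≤ ((d : ℝ) + 4) ^ 2 := by nlinarith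
  exact mul_le_mul_of_nonneg_left this (by positivity)
end

section
/- (Interchange of gradient and expectation for convex integrands) Let F̄ : ℝ^d × Ω → ℝ be convex in θ for every ω, with F(θ) = E[F̄(θ, ω)] finite in a neighborhood of an interior point θ₀. If F̄(·, ω) is differentiable at θ₀ for a.e. ω and F is differentiable at θ₀, then ∇F(θ₀) = E[∇_θ F̄(θ₀, ω)]. -/
set_option maxHeartbeats 1000000


open MeasureTheory
open scoped RealInnerProductSpace

section Aux

variable {E : Type*} [NormedAddCommGroup E] [InnerProductSpace ℝ E] [CompleteSpace E]

lemma aux_inner_gradient (f : E → ℝ) (x v : E) :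
    ⟪gradient f x, v⟫ = fderiv ℝ f x v := by
  show ⟪(InnerProductSpace.toDual ℝ E).symm (fderiv ℝ f x), v⟫ = fderiv ℝ f x v
  exact InnerProductSpace.toDual_symm_apply

lemma aux_line_deriv {f : E → ℝ} {x : E} (hd : DifferentiableAt ℝ f x) (v : E) :
    HasDerivAt (fun t : ℝ => f (x + t • v)) (fderiv ℝ f x v) 0 := by
  have h1 : HasDerivAt (fun t : ℝ => x + t • v) v 0 := by
    simpa using ((hasDerivAt_id (0 : ℝ)).smul_const v).const_add x
  have := HasFDerivAt.comp_hasDerivAt_of_eq (hl := hd.hasFDerivAt) (hf := h1) (hy := by simp)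
  exact this

lemma aux_subgrad {f : E → ℝ} (hf : ConvexOn ℝ Set.univ f) {x : E}
    (hd : DifferentiableAt ℝ f x) (y : E) :
    f x + ⟪gradient f x, y - x⟫ ≤ f y := by
  set φ : ℝ → ℝ := fun t => f (x + t • (y - x)) with hφ
  have hφconv : ConvexOn ℝ Set.univ φ := by
    have h := hf.comp_affineMap (AffineMap.lineMap x y)
    have : (f ∘ (AffineMap.lineMap x y)) = φ := by
      funext t
      simp [hφ, AffineMap.lineMap_apply_module', Function.comp, add_comm]
    rw [this] at h
    simpa using h
  have hφd : HasDerivAt φ (fderiv ℝ f x (y - x)) 0 := aux_line_deriv hd (y - x)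
  have hs := hφconv.le_slope_of_hasDerivAt (Set.mem_univ (0 : ℝ)) (Set.mem_univ (1 : ℝ))
    one_pos hφd
  rw [slope_def_field] at hs
  have h1 : φ 1 = f y := by simp [hφ]
  have h0 : φ 0 = f x := by simp [hφ]
  rw [aux_inner_gradient]
  rw [h1, h0] at hs
  have : fderiv ℝ f x (y - x) ≤ f y - f x := by
    simpa using hs
  linarith

end Aux

theorem interchange_gradient_expectation (d : ℕ) {Ω : Type*} [MeasurableSpace Ω]
    (P : Measure Ω) [IsProbabilityMeasure P]
    (Fbar : EuclideanSpace ℝ (Fin d) → Ω → ℝ)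
    (θ₀ : EuclideanSpace ℝ (Fin d))
    (hconv : ∀ ω, ConvexOn ℝ Set.univ fun θ => Fbar θ ω)
    (hint : ∃ ε > 0, ∀ θ ∈ Metric.ball θ₀ ε, Integrable (fun ω => Fbar θ ω) P)
    (hdiff : ∀ᵐ ω ∂P, DifferentiableAt ℝ (fun θ => Fbar θ ω) θ₀)
    (hFdiff : DifferentiableAt ℝ (fun θ => ∫ ω, Fbar θ ω ∂P) θ₀) :
    gradient (fun θ => ∫ ω, Fbar θ ω ∂P) θ₀
      = ∫ ω, gradient (fun θ => Fbar θ ω) θ₀ ∂P := by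
  classical
  obtain ⟨ε, hε, hI⟩ := hint
  set G : Ω → EuclideanSpace ℝ (Fin d) := fun ω => gradient (fun θ => Fbar θ ω) θ₀ with hG
  set F : EuclideanSpace ℝ (Fin d) → ℝ := fun θ => ∫ ω, Fbar θ ω ∂P with hF
  have hθ₀mem : θ₀ ∈ Metric.ball θ₀ ε := Metric.mem_ball_self hε
  -- a.e. subgradient inequality
  have hsub : ∀ θ : EuclideanSpace ℝ (Fin d), ∀ᵐ ω ∂P, Fbar θ₀ ω + ⟪G ω, θ - θ₀⟫ ≤ Fbar θ ω := by
    intro θ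
    filter_upwards [hdiff] with ω hω
    exact aux_subgrad (hconv ω) hω θ
  -- measurability of directional derivatives
  have hmeas : ∀ v : EuclideanSpace ℝ (Fin d), ‖v‖ < ε → AEStronglyMeasurable (fun ω => (⟪G ω, v⟫ : ℝ)) P := by
    intro v hv
    set u : ℕ → ℝ := fun n => ((n : ℝ) + 1)⁻¹ with hu
    have hupos : ∀ n, 0 < u n := fun n => by positivity
    have humem : ∀ n, θ₀ + u n • v ∈ Metric.ball θ₀ ε := by
      intro n
      have h1 : u n ≤ 1 := by
        rw [hu]
        simp only
        rw [inv_le_one_iff₀]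
        right; linarith [Nat.cast_nonneg (α := ℝ) n]
      have : ‖u n • v‖ ≤ ‖v‖ := by
        rw [norm_smul, Real.norm_eq_abs, abs_of_pos (hupos n)]
        nlinarith [norm_nonneg v, hupos n]
      simp only [Metric.mem_ball, dist_eq_norm]
      rw [add_sub_cancel_left]
      exact lt_of_le_of_lt this hv
    refine aestronglyMeasurable_of_tendsto_ae Filter.atTop
      (f := fun n ω => (Fbar (θ₀ + u n • v) ω - Fbar θ₀ ω) * ((n : ℝ) + 1)) ?_ ?_
    · intro n
      exact (((hI _ (humem n)).sub (hI θ₀ hθ₀mem)).aestronglyMeasurable).mul_const _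
    · filter_upwards [hdiff] with ω hω
      have hderiv : HasDerivAt (fun t : ℝ => Fbar (θ₀ + t • v) ω) ⟪G ω, v⟫ 0 := by
        rw [hG]; simp only
        rw [aux_inner_gradient]
        exact aux_line_deriv hω v
      have hslope := hasDerivAt_iff_tendsto_slope.1 hderiv
      have hutend : Filter.Tendsto u Filter.atTop (nhdsWithin 0 {(0:ℝ)}ᶜ) := by
        apply tendsto_nhdsWithin_of_tendsto_nhds_of_eventually_within
        · exact tendsto_one_div_add_atTop_nhds_zero_nat.congr (fun n => by
            rw [hu]; simp [one_div])
        · filter_upwards with n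
          exact (hupos n).ne'
      have := hslope.comp hutend
      refine this.congr (fun n => ?_)
      simp only [Function.comp, slope_def_field]
      rw [hu]
      simp only
      field_simp
      simp
  -- integrability of directional derivatives
  have hintdir : ∀ v : EuclideanSpace ℝ (Fin d), ‖v‖ < ε → Integrable (fun ω => (⟪G ω, v⟫ : ℝ)) P := by
    intro v hv
    have hmem₁ : θ₀ + v ∈ Metric.ball θ₀ ε := by
      simp only [Metric.mem_ball, dist_eq_norm]
      rw [add_sub_cancel_left]
      exact hv
    have hmem₂ : θ₀ - v ∈ Metric.ball θ₀ ε := by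
      simp only [Metric.mem_ball, dist_eq_norm]
      rw [show θ₀ - v - θ₀ = -v by abel, norm_neg]
      exact hv
    set A : Ω → ℝ := fun ω => Fbar (θ₀ + v) ω - Fbar θ₀ ω with hA
    set B : Ω → ℝ := fun ω => Fbar (θ₀ - v) ω - Fbar θ₀ ω with hB
    have hIA : Integrable A P := (hI _ hmem₁).sub (hI θ₀ hθ₀mem)
    have hIB : Integrable B P := (hI _ hmem₂).sub (hI θ₀ hθ₀mem)
    refine Integrable.mono' (hIA.abs.add hIB.abs) (hmeas v hv) ?_
    filter_upwards [hsub (θ₀ + v), hsub (θ₀ - v)] with ω h₁ h₂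
    rw [show θ₀ + v - θ₀ = v by abel] at h₁
    rw [show θ₀ - v - θ₀ = -v by abel, inner_neg_right] at h₂
    show ‖(⟪G ω, v⟫ : ℝ)‖ ≤ |Fbar (θ₀ + v) ω - Fbar θ₀ ω| + |Fbar (θ₀ - v) ω - Fbar θ₀ ω|
    have h₃ := le_abs_self (Fbar (θ₀ + v) ω - Fbar θ₀ ω)
    have h₄ := le_abs_self (Fbar (θ₀ - v) ω - Fbar θ₀ ω)
    have h₅ := abs_nonneg (Fbar (θ₀ + v) ω - Fbar θ₀ ω)
    have h₆ := abs_nonneg (Fbar (θ₀ - v) ω - Fbar θ₀ ω)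
    rw [Real.norm_eq_abs, abs_le]
    constructor <;> linarith
  -- integrability of G
  have hGint : Integrable G P := by
    set b := EuclideanSpace.basisFun (Fin d) ℝ with hb
    have key : ∀ i : Fin d, Integrable (fun ω => (⟪G ω, b i⟫ : ℝ)) P := by
      intro i
      have hsc : ‖(ε / 2) • b i‖ < ε := by
        rw [norm_smul, Real.norm_eq_abs, abs_of_pos (by linarith)]
        have hbi : ‖b i‖ ≤ 1 := by
          rw [hb]; simpa using (EuclideanSpace.basisFun (Fin d) ℝ).orthonormal.1 i |>.le
        nlinarith [norm_nonneg (b i)]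
      have := (hintdir _ hsc).const_mul (2 / ε)
      refine this.congr ?_
      filter_upwards with ω
      rw [inner_smul_right]
      field_simp
    have heq : G = fun ω => ∑ i : Fin d, (⟪G ω, b i⟫ : ℝ) • b i := by
      funext ω
      have h2 : ∀ i : Fin d, (⟪G ω, b i⟫ : ℝ) = b.repr (G ω) i := fun i => by
        rw [b.repr_apply_apply, real_inner_comm]
      calc G ω = ∑ i : Fin d, b.repr (G ω) i • b i := (b.sum_repr (G ω)).symm
        _ = ∑ i : Fin d, (⟪G ω, b i⟫ : ℝ) • b i :=
          (Finset.sum_congr rfl (fun i _ => by rw [h2 i])).symm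
    rw [heq]
    exact integrable_finset_sum _ (fun i _ => (key i).smul_const (b i))
  -- integrated subgradient inequality
  have hFsub : ∀ θ ∈ Metric.ball θ₀ ε, F θ₀ + ⟪∫ ω, G ω ∂P, θ - θ₀⟫ ≤ F θ := by
    intro θ hθ
    have hv : ‖θ - θ₀‖ < ε := by
      rw [← dist_eq_norm]; exact Metric.mem_ball.1 hθ
    have hinner : ⟪∫ ω, G ω ∂P, θ - θ₀⟫ = ∫ ω, ⟪G ω, θ - θ₀⟫ ∂P := by
      have h := ContinuousLinearMap.integral_comp_comm
        ((innerSL ℝ (E := EuclideanSpace ℝ (Fin d))).flip (θ - θ₀)) hGint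
      simp only [ContinuousLinearMap.flip_apply, innerSL_apply_apply] at h
      exact h.symm
    rw [hinner]
    have hIθ₀ : Integrable (fun ω => Fbar θ₀ ω) P := hI θ₀ hθ₀mem
    have : ∫ ω, (Fbar θ₀ ω + ⟪G ω, θ - θ₀⟫) ∂P ≤ ∫ ω, Fbar θ ω ∂P := by
      refine integral_mono_ae (hIθ₀.add (hintdir _ hv)) (hI θ hθ) ?_
      exact hsub θ
    rwa [integral_add hIθ₀ (hintdir _ hv)] at this
  -- conclude equality of gradients via directional derivatives
  set M : EuclideanSpace ℝ (Fin d) := ∫ ω, G ω ∂P with hM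
  have hgrad : ∀ v : EuclideanSpace ℝ (Fin d), ⟪gradient F θ₀, v⟫ = ⟪M, v⟫ := by
    intro v
    set ψ : ℝ → ℝ := fun t => F (θ₀ + t • v) - F θ₀ - t * ⟪M, v⟫ with hψ
    have hψ0 : ψ 0 = 0 := by simp [hψ]
    have hψderiv : HasDerivAt ψ (⟪gradient F θ₀, v⟫ - ⟪M, v⟫) 0 := by
      have h1 : HasDerivAt (fun t : ℝ => F (θ₀ + t • v)) (fderiv ℝ F θ₀ v) 0 :=
        aux_line_deriv hFdiff v
      have h2 : HasDerivAt (fun t : ℝ => t * ⟪M, v⟫) ⟪M, v⟫ 0 := by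
        simpa using (hasDerivAt_id (0 : ℝ)).mul_const (⟪M, v⟫ : ℝ)
      have := (h1.sub_const (F θ₀)).sub h2
      rw [aux_inner_gradient]
      exact this
    have hψmin : IsLocalMin ψ 0 := by
      rw [IsLocalMin, IsMinFilter]
      have hvsmall : ∀ᶠ t : ℝ in nhds 0, θ₀ + t • v ∈ Metric.ball θ₀ ε := by
        have hcont : Continuous (fun t : ℝ => θ₀ + t • v) := by continuity
        have : (fun t : ℝ => θ₀ + t • v) 0 = θ₀ := by simp
        have := hcont.continuousAt (x := (0:ℝ))
        rw [ContinuousAt] at this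
        simp only [zero_smul, add_zero] at this
        exact this (Metric.ball_mem_nhds θ₀ hε)
      filter_upwards [hvsmall] with t ht
      have := hFsub _ ht
      have he : θ₀ + t • v - θ₀ = t • v := by abel
      rw [he, inner_smul_right] at this
      rw [hψ0, hψ]
      simp only
      linarith
    have := hψmin.hasDerivAt_eq_zero hψderiv
    linarith
  have := hgrad
  apply ext_inner_right ℝ
  intro v
  rw [hgrad v]
end
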